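/- Equip ℂ^{n×n} with the (2,2) operator norm ‖·‖_n for every n ≥ 1, and for X ∈ ℂ^{n×n}, Y ∈ ℂ^{m×m} set ρ(X,Y) := ‖⊕_{α=1}^m X − ⊕_{β=1}^n Y‖_{nm}. For j, n ≥ 1, let Ω^j_n := {X ∈ ℂ^{n×n} : ‖X‖_n ≤ n/(n+j)}. Then for every j ≥ 1, sup{ρ(X,Y) : n, m ≥ 1, X ∈ Ω^j_n, Y ∈ Ω^j_m} = 2; in particular, this supremum does not tend to 0 as j → ∞. -/

import Mathlib

namespace NCPaper

variable {S : Type*}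

/-- Direct sum of two square matrices over `S`, with off-diagonal entries `O`. -/
def dSum (O : S) {n m : ℕ} (X : Matrix (Fin n) (Fin n) S) (Y : Matrix (Fin m) (Fin m) S) :
    Matrix (Fin (n + m)) (Fin (n + m)) S := fun i j =>
  if hi : (i : ℕ) < n then
    if hj : (j : ℕ) < n then X ⟨i, hi⟩ ⟨j, hj⟩ else O
  else if hj : (j : ℕ) < n then O
  else Y ⟨(i : ℕ) - n, by have := i.isLt; omega⟩ ⟨(j : ℕ) - n, by have := j.isLt; omega⟩

/-- Direct sum of `k` copies of a `d × d` matrix, as a `(k*d) × (k*d)` matrix. -/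
def repSum (O : S) {d : ℕ} (k : ℕ) (X : Matrix (Fin d) (Fin d) S) :
    Matrix (Fin (k * d)) (Fin (k * d)) S := fun i j =>
  if (i : ℕ) / d = (j : ℕ) / d then
    X ⟨(i : ℕ) % d, Nat.mod_lt _ (Nat.pos_of_ne_zero fun h => absurd i.isLt (by simp [h]))⟩
      ⟨(j : ℕ) % d, Nat.mod_lt _ (Nat.pos_of_ne_zero fun h => absurd j.isLt (by simp [h]))⟩
  else O

/-- Cast a square matrix along an equality of sizes. -/
def castMat {n m : ℕ} (h : n = m) (X : Matrix (Fin n) (Fin n) S) :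
    Matrix (Fin m) (Fin m) S := fun i j => X (Fin.cast h.symm i) (Fin.cast h.symm j)

/-- The support of a subset of the nc space: sizes where it is nonempty. -/
def supp (Ω : ∀ n : ℕ, Set (Matrix (Fin n) (Fin n) S)) : Set ℕ :=
  {n | 0 < n ∧ (Ω n).Nonempty}

/-- A subset of the nc space respects direct sums of matrices. -/
def RespectsDSums (O : S) (Ω : ∀ n : ℕ, Set (Matrix (Fin n) (Fin n) S)) : Prop :=
  ∀ ⦃n m : ℕ⦄ (X : Matrix (Fin n) (Fin n) S) (Y : Matrix (Fin m) (Fin m) S),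
    X ∈ Ω n → Y ∈ Ω m → dSum O X Y ∈ Ω (n + m)

/-- The (2,2) operator norm of a rectangular matrix over `ℝ` or `ℂ`. -/
noncomputable def l2opNorm {𝔽 : Type*} [RCLike 𝔽] {n m : ℕ}
    (S : Matrix (Fin n) (Fin m) 𝔽) : ℝ :=
  ‖LinearMap.toContinuousLinearMap (Matrix.toEuclideanLin S)‖

/-- The pseudometric `ρ(X,Y) := ‖⊕_{α=1}^m X − ⊕_{β=1}^n Y‖_{nm}` comparing square matrices
of different sizes. -/
noncomputable def rho {V : Type*} [AddCommGroup V]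
    (N : ∀ k : ℕ, Matrix (Fin k) (Fin k) V → ℝ) {n m : ℕ}
    (X : Matrix (Fin n) (Fin n) V) (Y : Matrix (Fin m) (Fin m) V) : ℝ :=
  N (n * m) (castMat (Nat.mul_comm m n) (repSum 0 m X) - repSum 0 n Y)

/-- The levelwise (2,2) operator norms on complex matrices. -/
noncomputable def cNorm : ∀ k : ℕ, Matrix (Fin k) (Fin k) ℂ → ℝ := fun _ A => l2opNorm A

/-- The set of distances `ρ(X,Y)` between points of the nested nc sets
`Ω^j_n = {X ∈ ℂ^{n×n} : ‖X‖_n ≤ n/(n+j)}`. -/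
noncomputable def diamSet (j : ℕ) : Set ℝ :=
  {r : ℝ | ∃ (n m : ℕ) (X : Matrix (Fin n) (Fin n) ℂ) (Y : Matrix (Fin m) (Fin m) ℂ),
    0 < n ∧ 0 < m ∧ l2opNorm X ≤ (n : ℝ) / ((n : ℝ) + (j : ℝ)) ∧
    l2opNorm Y ≤ (m : ℝ) / ((m : ℝ) + (j : ℝ)) ∧ r = rho cNorm X Y}


section Aux

open scoped Matrix.Norms.L2Operator
open Filter

lemma l2opNorm_eq_norm {n m : ℕ} (A : Matrix (Fin n) (Fin m) ℂ) : l2opNorm A = ‖A‖ := rfl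

lemma esum_sq {N : ℕ} (v : EuclideanSpace ℂ (Fin N)) : ‖v‖ ^ 2 = ∑ i, ‖v i‖ ^ 2 := by
  rw [EuclideanSpace.norm_eq, Real.sq_sqrt (Finset.sum_nonneg fun i _ => sq_nonneg _)]

lemma norm_le_of_bound {N : ℕ} (M : Matrix (Fin N) (Fin N) ℂ) (C : ℝ) (hC : 0 ≤ C)
    (h : ∀ x : EuclideanSpace ℂ (Fin N),
      ‖(EuclideanSpace.equiv (Fin N) ℂ).symm (M.mulVec x)‖ ≤ C * ‖x‖) :
    ‖M‖ ≤ C := by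
  rw [Matrix.l2_opNorm_def]
  exact ContinuousLinearMap.opNorm_le_bound _ hC fun x => h x

lemma norm_smul_one {k : ℕ} (hk : 0 < k) (c : ℂ) :
    ‖c • (1 : Matrix (Fin k) (Fin k) ℂ)‖ = ‖c‖ := by
  haveI : Nonempty (Fin k) := Fin.pos_iff_nonempty.mp hk
  rw [norm_smul, Matrix.cstar_norm_def, map_one, norm_one, mul_one]

lemma entry_repSum {d k : ℕ} (X : Matrix (Fin d) (Fin d) ℂ) (α β : Fin k) (p q : Fin d) :
    repSum (0:ℂ) k X (finProdFinEquiv (α, p)) (finProdFinEquiv (β, q)) =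
      if α = β then X p q else 0 := by
  have hd : 0 < d := p.pos
  have hval : ∀ (γ : Fin k) (r : Fin d), ((finProdFinEquiv (γ, r) : Fin (k*d)) : ℕ) = r + d * γ :=
    fun γ r => rfl
  have hdiv : ∀ (γ : Fin k) (r : Fin d), ((finProdFinEquiv (γ, r) : Fin (k*d)) : ℕ) / d = γ := by
    intro γ r
    rw [hval, Nat.add_mul_div_left _ _ hd, Nat.div_eq_of_lt r.isLt, Nat.zero_add]
  have hmod : ∀ (γ : Fin k) (r : Fin d),
      ((finProdFinEquiv (γ, r) : Fin (k*d)) : ℕ) % d = (r : ℕ) := by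
    intro γ r
    rw [hval, Nat.add_mul_mod_self_left, Nat.mod_eq_of_lt r.isLt]
  simp only [repSum, hdiv, hmod, Fin.eta, Fin.val_eq_val]

lemma norm_repSum_le {d : ℕ} (k : ℕ) (X : Matrix (Fin d) (Fin d) ℂ) :
    ‖repSum (0:ℂ) k X‖ ≤ ‖X‖ := by
  refine norm_le_of_bound _ _ (norm_nonneg X) fun x => ?_
  set e : Fin k × Fin d ≃ Fin (k * d) := finProdFinEquiv with he
  set w : Fin k → EuclideanSpace ℂ (Fin d) :=
    fun α => (EuclideanSpace.equiv (Fin d) ℂ).symm (fun q => x (e (α, q))) with hw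
  have key : ∀ (α : Fin k) (p : Fin d),
      (repSum (0:ℂ) k X).mulVec x (e (α, p)) = X.mulVec (w α) p := by
    intro α p
    show ∑ j, repSum (0:ℂ) k X (e (α, p)) j * x j = ∑ q, X p q * (w α) q
    rw [← Fintype.sum_equiv e (fun z => repSum (0:ℂ) k X (e (α, p)) (e z) * x (e z))
      (fun j => repSum (0:ℂ) k X (e (α, p)) j * x j) (fun z => rfl)]
    rw [Fintype.sum_prod_type]
    simp only [he, entry_repSum, ite_mul, zero_mul]
    rw [Finset.sum_comm]
    simp only [Finset.sum_ite_eq, Finset.mem_univ, if_true]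
    rfl
  rw [← Real.sqrt_sq (norm_nonneg ((EuclideanSpace.equiv (Fin (k*d)) ℂ).symm
      ((repSum (0:ℂ) k X).mulVec x))),
    ← Real.sqrt_sq (mul_nonneg (norm_nonneg X) (norm_nonneg x))]
  apply Real.sqrt_le_sqrt
  rw [mul_pow, esum_sq, esum_sq]
  calc ∑ i, ‖((EuclideanSpace.equiv (Fin (k*d)) ℂ).symm ((repSum (0:ℂ) k X).mulVec x)) i‖ ^ 2
      = ∑ z : Fin k × Fin d, ‖(repSum (0:ℂ) k X).mulVec x (e z)‖ ^ 2 := by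
        rw [Fintype.sum_equiv e (fun z => ‖(repSum (0:ℂ) k X).mulVec x (e z)‖ ^ 2)
          (fun i => ‖((EuclideanSpace.equiv (Fin (k*d)) ℂ).symm
            ((repSum (0:ℂ) k X).mulVec x)) i‖ ^ 2) (fun z => rfl)]
    _ = ∑ α : Fin k, ∑ p : Fin d, ‖X.mulVec (w α) p‖ ^ 2 := by
        rw [Fintype.sum_prod_type]
        exact Finset.sum_congr rfl fun α _ => Finset.sum_congr rfl fun p _ => by rw [key]
    _ = ∑ α : Fin k, ‖(EuclideanSpace.equiv (Fin d) ℂ).symm (X.mulVec (w α))‖ ^ 2 :=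
        Finset.sum_congr rfl fun α _ => by rw [esum_sq]; rfl
    _ ≤ ∑ α : Fin k, (‖X‖ * ‖w α‖) ^ 2 :=
        Finset.sum_le_sum fun α _ =>
          pow_le_pow_left₀ (norm_nonneg _) (Matrix.l2_opNorm_mulVec X (w α)) 2
    _ = ‖X‖ ^ 2 * ∑ α : Fin k, ‖w α‖ ^ 2 := by
        rw [Finset.mul_sum]; exact Finset.sum_congr rfl fun α _ => by ring
    _ = ‖X‖ ^ 2 * ∑ α : Fin k, ∑ q : Fin d, ‖x (e (α, q))‖ ^ 2 := by
        congr 1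
        exact Finset.sum_congr rfl fun α _ => by rw [esum_sq]; rfl
    _ = ‖X‖ ^ 2 * ∑ i, ‖x i‖ ^ 2 := by
        congr 1
        rw [(Fintype.sum_prod_type (f := fun z : Fin k × Fin d => ‖x (e z)‖ ^ 2)).symm]
        exact Fintype.sum_equiv e (fun z => ‖x (e z)‖ ^ 2) (fun i => ‖x i‖ ^ 2) (fun z => rfl)

lemma norm_castMat {n m : ℕ} (h : n = m) (A : Matrix (Fin n) (Fin n) ℂ) :
    ‖castMat h A‖ = ‖A‖ := by subst h; rfl

lemma castMat_smul_one {n m : ℕ} (h : n = m) (c : ℂ) :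
    castMat h (c • (1 : Matrix (Fin n) (Fin n) ℂ)) = c • (1 : Matrix (Fin m) (Fin m) ℂ) := by
  subst h; rfl

lemma repSum_smul_one {d : ℕ} (k : ℕ) (c : ℂ) :
    repSum (0:ℂ) k (c • (1 : Matrix (Fin d) (Fin d) ℂ)) =
      c • (1 : Matrix (Fin (k * d)) (Fin (k * d)) ℂ) := by
  funext i j
  by_cases h1 : (i : ℕ) / d = (j : ℕ) / d
  · by_cases h2 : (i : ℕ) % d = (j : ℕ) % d
    · have hij : i = j := by
        apply Fin.ext
        conv_lhs => rw [← Nat.div_add_mod (i : ℕ) d]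
        conv_rhs => rw [← Nat.div_add_mod (j : ℕ) d]
        rw [h1, h2]
      subst hij
      simp [repSum, Matrix.one_apply]
    · have hij : i ≠ j := fun h => h2 (by rw [h])
      simp [repSum, h1, h2, Matrix.one_apply, hij, Fin.ext_iff]
  · have hij : i ≠ j := fun h => h1 (by rw [h])
    simp [repSum, h1, Matrix.one_apply, hij]

lemma mem_diamSet' (j n m : ℕ) (hn : 0 < n) (hm : 0 < m) :
    ((n:ℝ)/((n:ℝ)+(j:ℝ)) + (m:ℝ)/((m:ℝ)+(j:ℝ))) ∈ diamSet j := by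
  set a : ℝ := (n:ℝ)/((n:ℝ)+(j:ℝ)) with ha'
  set b : ℝ := (m:ℝ)/((m:ℝ)+(j:ℝ)) with hb'
  have ha : 0 ≤ a := by rw [ha']; positivity
  have hb : 0 ≤ b := by rw [hb']; positivity
  refine ⟨n, m, (a : ℂ) • 1, ((-b : ℝ) : ℂ) • 1, hn, hm, ?_, ?_, ?_⟩
  · rw [l2opNorm_eq_norm, norm_smul_one hn]
    simp [abs_of_nonneg ha]
    exact ha'.le
  · rw [l2opNorm_eq_norm, norm_smul_one hm]
    simp [abs_of_nonneg hb]
    exact hb'.le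
  · show a + b = rho cNorm _ _
    unfold rho cNorm
    rw [repSum_smul_one, repSum_smul_one, castMat_smul_one]
    have hc : ((a : ℂ) • (1 : Matrix (Fin (n*m)) (Fin (n*m)) ℂ)) - ((-b : ℝ) : ℂ) • 1
        = (((a + b : ℝ)) : ℂ) • 1 := by
      rw [← sub_smul]
      congr 1
      push_cast
      ring
    rw [hc, l2opNorm_eq_norm, norm_smul_one (Nat.mul_pos hn hm)]
    rw [Complex.norm_real]
    exact (Real.norm_of_nonneg (by linarith)).symm

lemma diamSet_le_two (j : ℕ) : ∀ r ∈ diamSet j, r ≤ 2 := by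
  rintro r ⟨n, m, X, Y, hn, hm, hX, hY, rfl⟩
  have hnj : (0:ℝ) < (n:ℝ) + (j:ℝ) := by
    have : (1:ℝ) ≤ (n:ℝ) := by exact_mod_cast hn
    have := Nat.cast_nonneg (α := ℝ) j
    linarith
  have hmj : (0:ℝ) < (m:ℝ) + (j:ℝ) := by
    have : (1:ℝ) ≤ (m:ℝ) := by exact_mod_cast hm
    have := Nat.cast_nonneg (α := ℝ) j
    linarith
  have hXn : ‖X‖ ≤ 1 := by
    rw [← l2opNorm_eq_norm]
    refine hX.trans (div_le_one_of_le₀ ?_ hnj.le)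
    have := Nat.cast_nonneg (α := ℝ) j
    linarith
  have hYn : ‖Y‖ ≤ 1 := by
    rw [← l2opNorm_eq_norm]
    refine hY.trans (div_le_one_of_le₀ ?_ hmj.le)
    have := Nat.cast_nonneg (α := ℝ) j
    linarith
  unfold rho cNorm
  rw [l2opNorm_eq_norm]
  calc ‖castMat (Nat.mul_comm m n) (repSum 0 m X) - repSum 0 n Y‖
      ≤ ‖castMat (Nat.mul_comm m n) (repSum 0 m X)‖ + ‖repSum (0:ℂ) n Y‖ := norm_sub_le _ _
    _ ≤ ‖X‖ + ‖Y‖ := by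
        rw [norm_castMat]
        exact add_le_add (norm_repSum_le m X) (norm_repSum_le n Y)
    _ ≤ 1 + 1 := add_le_add hXn hYn
    _ = 2 := by norm_num

lemma isLUB_diamSet (j : ℕ) : IsLUB (diamSet j) 2 := by
  constructor
  · exact diamSet_le_two j
  · intro b hb
    have h0 : Tendsto (fun n : ℕ => (j:ℝ)/((n:ℝ)+(j:ℝ))) atTop (nhds 0) :=
      Tendsto.div_atTop tendsto_const_nhds
        (tendsto_atTop_add_const_right _ _ tendsto_natCast_atTop_atTop)
    have h1 : Tendsto (fun n : ℕ => (n:ℝ)/((n:ℝ)+(j:ℝ))) atTop (nhds 1) := by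
      have h1' : Tendsto (fun n : ℕ => 1 - (j:ℝ)/((n:ℝ)+(j:ℝ))) atTop (nhds 1) := by
        simpa using (tendsto_const_nhds (α := ℕ) (x := (1:ℝ))).sub h0
      refine h1'.congr' ?_
      filter_upwards [eventually_ge_atTop 1] with n hn
      have hpos : (0:ℝ) < (n:ℝ) + (j:ℝ) := by
        have : (1:ℝ) ≤ (n:ℝ) := by exact_mod_cast hn
        have := Nat.cast_nonneg (α := ℝ) j
        linarith
      field_simp
      ring
    have ht : Tendsto (fun n : ℕ => (n:ℝ)/((n:ℝ)+(j:ℝ)) + (n:ℝ)/((n:ℝ)+(j:ℝ)))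
        atTop (nhds 2) := by
      have := h1.add h1
      norm_num at this
      exact this
    refine le_of_tendsto ht ?_
    filter_upwards [eventually_ge_atTop 1] with n hn
    exact hb (mem_diamSet' j n n hn hn)

end Aux

/-- **Nested sets example.** For every `j ≥ 1` the `ρ`-diameter of the nc set
`Ω^j = {X : ‖X‖_n ≤ n/(n+j)}` equals `2`; in particular it does not tend to `0`
as `j → ∞`. -/
theorem diam_of_nested_sets_eq_two :
    (∀ j : ℕ, 1 ≤ j → IsLUB (diamSet j) 2) ∧
    ¬ Filter.Tendsto (fun j : ℕ => sSup (diamSet j)) Filter.atTop (nhds 0) := by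
  refine ⟨fun j _ => isLUB_diamSet j, ?_⟩
  intro hT
  have h2 : ∀ᶠ j in Filter.atTop, sSup (diamSet j) = 2 := by
    filter_upwards [Filter.eventually_ge_atTop 1] with j hj
    exact (isLUB_diamSet j).csSup_eq ⟨_, mem_diamSet' j 1 1 one_pos one_pos⟩
  have hconst : Filter.Tendsto (fun _ : ℕ => (2:ℝ)) Filter.atTop (nhds 0) :=
    Filter.Tendsto.congr' h2 hT
  have : (2:ℝ) = 0 := tendsto_nhds_unique tendsto_const_nhds hconst
  norm_num at this

end NCPaper
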